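/- Let U be open in a complex Banach space E, v a weight on U, F a complex Banach space, and f ∈ H^∞_v(U,F). The transpose map f^t : F* → H^∞_v(U,ℂ), y* ↦ y*∘f, is a well-defined bounded linear operator with ‖f^t‖ = ‖f‖_v. -/

import Mathlib

/-- The transpose `f^t : F* → H^∞_v(U,ℂ)`, `y* ↦ y*∘f`, of `f ∈ H^∞_v(U,F)` is
well defined (each `y*∘f` is holomorphic with `‖y*∘f‖_v ≤ ‖y*‖·‖f‖_v`) and its
operator norm equals `‖f‖_v`. -/
theorem stmt13 {E F : Type*} [NormedAddCommGroup E] [NormedSpace ℂ E]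
    [NormedAddCommGroup F] [NormedSpace ℂ F] [CompleteSpace F]
    (U : Set E) (hU : IsOpen U) (v : E → ℝ) (hv : ContinuousOn v U)
    (hvpos : ∀ x ∈ U, 0 < v x)
    (f : E → F) (hf : DifferentiableOn ℂ f U)
    (hb : BddAbove (Set.range fun x : U => v x.1 * ‖f x.1‖)) :
    (∀ φ : StrongDual ℂ F,
      DifferentiableOn ℂ (fun x => φ (f x)) U ∧
      ∀ x ∈ U, v x * ‖φ (f x)‖ ≤ ‖φ‖ * ⨆ x : U, v x.1 * ‖f x.1‖) ∧
    (⨆ φ : Metric.closedBall (0 : StrongDual ℂ F) 1,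
        ⨆ x : U, v x.1 * ‖(φ : StrongDual ℂ F) (f x.1)‖) =
      ⨆ x : U, v x.1 * ‖f x.1‖ := by
  set M : ℝ := ⨆ x : U, v x.1 * ‖f x.1‖ with hM
  have hvle : ∀ x : U, v x.1 * ‖f x.1‖ ≤ M := fun x => le_ciSup hb x
  have hM0 : 0 ≤ M := Real.iSup_nonneg fun x =>
    mul_nonneg (hvpos x.1 x.2).le (norm_nonneg _)
  -- key pointwise bound
  have key : ∀ (φ : StrongDual ℂ F) (x : E), x ∈ U →
      v x * ‖φ (f x)‖ ≤ ‖φ‖ * M := by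
    intro φ x hx
    calc v x * ‖φ (f x)‖ ≤ v x * (‖φ‖ * ‖f x‖) :=
          mul_le_mul_of_nonneg_left (φ.le_opNorm _) (hvpos x hx).le
      _ = ‖φ‖ * (v x * ‖f x‖) := by ring
      _ ≤ ‖φ‖ * M := mul_le_mul_of_nonneg_left (hvle ⟨x, hx⟩) (norm_nonneg _)
  have part1 : ∀ φ : StrongDual ℂ F,
      DifferentiableOn ℂ (fun x => φ (f x)) U ∧
      ∀ x ∈ U, v x * ‖φ (f x)‖ ≤ ‖φ‖ * M := by
    intro φ
    exact ⟨φ.differentiable.comp_differentiableOn hf, fun x hx => key φ x hx⟩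
  refine ⟨part1, ?_⟩
  -- inner sups are bounded by M for φ in the unit ball
  have hinner : ∀ φ : Metric.closedBall (0 : StrongDual ℂ F) 1,
      (⨆ x : U, v x.1 * ‖(φ : StrongDual ℂ F) (f x.1)‖) ≤ M := by
    intro φ
    refine Real.iSup_le (fun x => ?_) hM0
    have hφ : ‖(φ : StrongDual ℂ F)‖ ≤ 1 := by
      exact mem_closedBall_zero_iff.mp φ.2
    calc v x.1 * ‖(φ : StrongDual ℂ F) (f x.1)‖
        ≤ ‖(φ : StrongDual ℂ F)‖ * M := key _ x.1 x.2
      _ ≤ 1 * M := mul_le_mul_of_nonneg_right hφ hM0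
      _ = M := one_mul M
  have hbd : BddAbove (Set.range fun φ : Metric.closedBall (0 : StrongDual ℂ F) 1 =>
      ⨆ x : U, v x.1 * ‖(φ : StrongDual ℂ F) (f x.1)‖) := by
    refine ⟨M, ?_⟩
    rintro _ ⟨φ, rfl⟩
    exact hinner φ
  refine le_antisymm (Real.iSup_le (fun φ => hinner φ) hM0) ?_
  -- lower bound: for each x, find a norming functional
  set S : ℝ := ⨆ φ : Metric.closedBall (0 : StrongDual ℂ F) 1,
      ⨆ x : U, v x.1 * ‖(φ : StrongDual ℂ F) (f x.1)‖ with hS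
  have hS0 : 0 ≤ S := by
    have h0mem : (0 : StrongDual ℂ F) ∈
        Metric.closedBall (0 : StrongDual ℂ F) 1 :=
      Metric.mem_closedBall_self zero_le_one
    calc (0 : ℝ) ≤ ⨆ x : U, v x.1 * ‖((⟨0, h0mem⟩ : Metric.closedBall
          (0 : StrongDual ℂ F) 1) : StrongDual ℂ F) (f x.1)‖ :=
          Real.iSup_nonneg fun x => mul_nonneg (hvpos x.1 x.2).le (norm_nonneg _)
      _ ≤ S := le_ciSup hbd _
  refine Real.iSup_le (fun x => ?_) hS0
  rcases eq_or_ne (f x.1) 0 with hfx | hfx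
  · simpa [hfx] using hS0
  · obtain ⟨φ, hφ1, hφx⟩ := exists_dual_vector ℂ (f x.1) (norm_ne_zero_iff.mpr hfx)
    have hφmem : φ ∈ Metric.closedBall (0 : StrongDual ℂ F) 1 := by
      simp [Metric.mem_closedBall, dist_zero_right, hφ1]
    have hbin : BddAbove (Set.range fun y : U => v y.1 * ‖φ (f y.1)‖) := by
      refine ⟨M, ?_⟩
      rintro _ ⟨y, rfl⟩
      have := key φ y.1 y.2
      simpa [hφ1] using this
    calc v x.1 * ‖f x.1‖ = v x.1 * ‖φ (f x.1)‖ := by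
          rw [hφx]; simp
      _ ≤ ⨆ y : U, v y.1 * ‖φ (f y.1)‖ := le_ciSup hbin x
      _ ≤ S := le_ciSup hbd (⟨φ, hφmem⟩ : Metric.closedBall (0 : StrongDual ℂ F) 1)
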